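/- Let I be a finite index set, let H be a finite family of subsets of I, and suppose H = H_1 union H_2 where each H_i is laminar, i.e., for all S, S' in H_i, either S is a subset of S', or S' is a subset of S, or S and S' are disjoint (such H is called bi-hierarchical). For each S in H let n_S <= N_S be natural numbers, and define the marginal polytope MgS = { x : I -> R : x(i) >= 0 for all i, and n_S <= sum_{i in S} x(i) <= N_S for all S in H }. Assume MgS is bounded. Let P be the set of integer-valued points of MgS. Then MgS equals the convex hull of P; in particular every marginal strategy is implementable as a mixed strategy over pure strategies. -/

import Mathlib

open scoped BigOperators
open Finset

set_option linter.unusedSectionVars false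
set_option maxHeartbeats 1600000

/-- A family of subsets is laminar if any two of its members are nested or
disjoint. -/
def Laminar {I : Type*} (H : Finset (Finset I)) : Prop :=
  ∀ S ∈ H, ∀ S' ∈ H, S ⊆ S' ∨ S' ⊆ S ∨ Disjoint S S'

/-! ### Auxiliary facts about real numbers with integer values -/

def IsIntR (r : ℝ) : Prop := ∃ z : ℤ, r = (z : ℝ)

lemma isIntR_zero : IsIntR 0 := ⟨0, by simp⟩
lemma isIntR_add {a b : ℝ} (ha : IsIntR a) (hb : IsIntR b) : IsIntR (a + b) := by
  obtain ⟨z, rfl⟩ := ha; obtain ⟨w, rfl⟩ := hb; exact ⟨z + w, by push_cast; ring⟩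
lemma isIntR_neg {a : ℝ} (ha : IsIntR a) : IsIntR (-a) := by
  obtain ⟨z, rfl⟩ := ha; exact ⟨-z, by push_cast; ring⟩
lemma isIntR_sub {a b : ℝ} (ha : IsIntR a) (hb : IsIntR b) : IsIntR (a - b) := by
  simpa [sub_eq_add_neg] using isIntR_add ha (isIntR_neg hb)
lemma isIntR_sum {α : Type*} {s : Finset α} {f : α → ℝ} (h : ∀ i ∈ s, IsIntR (f i)) :
    IsIntR (∑ i ∈ s, f i) :=
  Finset.sum_induction f IsIntR (fun _ _ => isIntR_add) isIntR_zero h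

/-! ### The key combinatorial lemma: a nonzero direction orthogonal to two
block partitions (all blocks of size at least two). -/

lemma keyStep {I : Type*} [Fintype I] [DecidableEq I]
    (F : Finset I) (Pa Pb : Finset (Finset I)) (i : I) (B₀ : Finset I)
    (hi : i ∈ F) (hB₀ : B₀ ∈ Pb) (hiB₀ : i ∈ B₀)
    (hPbd : ∀ B ∈ Pb, ∀ B' ∈ Pb, B ≠ B' → Disjoint B B')
    (hiA : ∀ B ∈ Pa, i ∉ B)
    (IH : ∃ d : I → ℝ, d ≠ 0 ∧ (∀ j ∉ F.erase i, d j = 0) ∧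
      (∀ B ∈ Pa, ∑ j ∈ B, d j = 0) ∧ (∀ B ∈ Pb.erase B₀, ∑ j ∈ B, d j = 0)) :
    ∃ d : I → ℝ, d ≠ 0 ∧ (∀ j ∉ F, d j = 0) ∧
      (∀ B ∈ Pa, ∑ j ∈ B, d j = 0) ∧ (∀ B ∈ Pb, ∑ j ∈ B, d j = 0) := by
  obtain ⟨d', hd0, hsupp, hA, hB⟩ := IH
  have hd'i : d' i = 0 := hsupp i (by simp)
  refine ⟨fun j => if j = i then -∑ k ∈ B₀.erase i, d' k else d' j, ?_, ?_, ?_, ?_⟩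
  · obtain ⟨j, hj⟩ := Function.ne_iff.mp hd0
    have hji : j ≠ i := by rintro rfl; exact hj hd'i
    intro h
    have := congrFun h j
    simp only [hji, if_neg hji, Pi.zero_apply] at this
    exact hj this
  · intro j hj
    have hji : j ≠ i := by rintro rfl; exact hj hi
    have : j ∉ F.erase i := fun h => hj (Finset.mem_of_mem_erase h)
    simp [hji, hsupp j this]
  · intro B hBmem
    rw [Finset.sum_congr rfl (fun j hj => if_neg (by rintro rfl; exact hiA B hBmem hj))]
    exact hA B hBmem
  · intro B hBmem
    rcases eq_or_ne B B₀ with rfl | hne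
    · rw [← Finset.add_sum_erase _ _ hiB₀]
      rw [Finset.sum_congr rfl (fun j hj => if_neg (Finset.ne_of_mem_erase hj))]
      simp
    · have hiB : i ∉ B := by
        intro hmem
        exact (Finset.disjoint_left.mp (hPbd B hBmem B₀ hB₀ hne) hmem) hiB₀
      rw [Finset.sum_congr rfl (fun j hj => if_neg (by rintro rfl; exact hiB hj))]
      exact hB B (Finset.mem_erase.mpr ⟨hne, hBmem⟩)

lemma keyLemma {I : Type*} [Fintype I] [DecidableEq I] :
    ∀ (F : Finset I), F.Nonempty → ∀ (P₁ P₂ : Finset (Finset I)),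
    (∀ B ∈ P₁, B ⊆ F) → (∀ B ∈ P₁, 2 ≤ B.card) →
    (∀ B ∈ P₁, ∀ B' ∈ P₁, B ≠ B' → Disjoint B B') →
    (∀ B ∈ P₂, B ⊆ F) → (∀ B ∈ P₂, 2 ≤ B.card) →
    (∀ B ∈ P₂, ∀ B' ∈ P₂, B ≠ B' → Disjoint B B') →
    ∃ d : I → ℝ, d ≠ 0 ∧ (∀ j ∉ F, d j = 0) ∧
      (∀ B ∈ P₁, ∑ j ∈ B, d j = 0) ∧ (∀ B ∈ P₂, ∑ j ∈ B, d j = 0) := by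
  intro F
  induction F using Finset.strongInduction with
  | _ F IH =>
  intro hF P₁ P₂ h1F h12 h1d h2F h22 h2d
  by_cases hfree : ∃ i ∈ F, (∀ B ∈ P₁, i ∉ B) ∧ (∀ B ∈ P₂, i ∉ B)
  · obtain ⟨i, hi, hn1, hn2⟩ := hfree
    refine ⟨Pi.single i 1, ?_, ?_, ?_, ?_⟩
    · intro h
      have := congrFun h i
      simp at this
    · intro j hj
      exact Pi.single_eq_of_ne (by rintro rfl; exact hj hi) 1
    · intro B hB
      exact Finset.sum_eq_zero fun j hj =>
        Pi.single_eq_of_ne (by rintro rfl; exact hn1 B hB hj) 1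
    · intro B hB
      exact Finset.sum_eq_zero fun j hj =>
        Pi.single_eq_of_ne (by rintro rfl; exact hn2 B hB hj) 1
  · by_cases hone : ∃ i ∈ F, ((∃ B ∈ P₂, i ∈ B) ∧ ∀ B ∈ P₁, i ∉ B) ∨
        ((∃ B ∈ P₁, i ∈ B) ∧ ∀ B ∈ P₂, i ∉ B)
    · obtain ⟨i, hi, hcase⟩ := hone
      rcases hcase with ⟨⟨B₀, hB₀, hiB₀⟩, hiA⟩ | ⟨⟨B₀, hB₀, hiB₀⟩, hiA⟩
      · -- i is only in a P₂ block B₀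
        have hFi : F.erase i ⊂ F := Finset.erase_ssubset hi
        have hFine : (F.erase i).Nonempty := by
          obtain ⟨j, hj, hji⟩ := Finset.exists_mem_ne
            (lt_of_lt_of_le one_lt_two (h22 B₀ hB₀)) i
          exact ⟨j, Finset.mem_erase.mpr ⟨hji, h2F B₀ hB₀ hj⟩⟩
        refine keyStep F P₁ P₂ i B₀ hi hB₀ hiB₀ h2d hiA
          (IH (F.erase i) hFi hFine P₁ (P₂.erase B₀) ?_ h12 h1d ?_
            (fun B hB => h22 B (Finset.mem_of_mem_erase hB)) ?_)
        · intro B hB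
          exact Finset.subset_erase.mpr ⟨h1F B hB, hiA B hB⟩
        · intro B hB
          obtain ⟨hne, hBP⟩ := Finset.mem_erase.mp hB
          refine Finset.subset_erase.mpr ⟨h2F B hBP, fun hmem => ?_⟩
          exact (Finset.disjoint_left.mp (h2d B hBP B₀ hB₀ hne) hmem) hiB₀
        · intro B hB B' hB' hne
          exact h2d B (Finset.mem_of_mem_erase hB) B' (Finset.mem_of_mem_erase hB') hne
      · -- i is only in a P₁ block B₀ (symmetric)
        have hFi : F.erase i ⊂ F := Finset.erase_ssubset hi
        have hFine : (F.erase i).Nonempty := by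
          obtain ⟨j, hj, hji⟩ := Finset.exists_mem_ne
            (lt_of_lt_of_le one_lt_two (h12 B₀ hB₀)) i
          exact ⟨j, Finset.mem_erase.mpr ⟨hji, h1F B₀ hB₀ hj⟩⟩
        have hh1 : ∀ B ∈ P₂, B ⊆ F.erase i := by
          intro B hB
          exact Finset.subset_erase.mpr ⟨h2F B hB, hiA B hB⟩
        have hh2 : ∀ B ∈ P₁.erase B₀, B ⊆ F.erase i := by
          intro B hB
          obtain ⟨hne, hBP⟩ := Finset.mem_erase.mp hB
          refine Finset.subset_erase.mpr ⟨h1F B hBP, fun hmem => ?_⟩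
          exact (Finset.disjoint_left.mp (h1d B hBP B₀ hB₀ hne) hmem) hiB₀
        have hh3 : ∀ B ∈ P₁.erase B₀, ∀ B' ∈ P₁.erase B₀, B ≠ B' → Disjoint B B' := by
          intro B hB B' hB' hne
          exact h1d B (Finset.mem_of_mem_erase hB) B' (Finset.mem_of_mem_erase hB') hne
        obtain ⟨d, hd0, hds, hdb, hda⟩ :=
          keyStep F P₂ P₁ i B₀ hi hB₀ hiB₀ h1d hiA
          (IH (F.erase i) hFi hFine P₂ (P₁.erase B₀) hh1 h22 h2d hh2
            (fun B hB => h12 B (Finset.mem_of_mem_erase hB)) hh3)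
        exact ⟨d, hd0, hds, hda, hdb⟩
    · -- every element of F is covered by both P₁ and P₂
      have hcov1 : ∀ i ∈ F, ∃ B ∈ P₁, i ∈ B := by
        intro i hi
        by_contra hno; push_neg at hno
        have h2 : ∃ B ∈ P₂, i ∈ B := by
          by_contra hno2; push_neg at hno2
          exact hfree ⟨i, hi, hno, hno2⟩
        exact hone ⟨i, hi, Or.inl ⟨h2, hno⟩⟩
      have hcov2 : ∀ i ∈ F, ∃ B ∈ P₂, i ∈ B := by
        intro i hi
        by_contra hno; push_neg at hno
        have h2 : ∃ B ∈ P₁, i ∈ B := by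
          by_contra hno2; push_neg at hno2
          exact hfree ⟨i, hi, hno2, hno⟩
        exact hone ⟨i, hi, Or.inr ⟨h2, hno⟩⟩
      by_contra hcon
      have huniq : ∀ d : I → ℝ, (∀ j ∉ F, d j = 0) → (∀ B ∈ P₁, ∑ j ∈ B, d j = 0) →
          (∀ B ∈ P₂, ∑ j ∈ B, d j = 0) → d = 0 := by
        intro d hs hh1 hh2
        by_contra hne
        exact hcon ⟨d, hne, hs, hh1, hh2⟩
      have hbu : ∀ (Q : Finset (Finset I)), (∀ B ∈ Q, B ⊆ F) → (∀ i ∈ F, ∃ B ∈ Q, i ∈ B) →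
          Q.biUnion (fun B => B) = F := by
        intro Q hQF hQc
        apply Finset.Subset.antisymm
        · exact Finset.biUnion_subset.mpr hQF
        · intro i hi
          obtain ⟨B, hB, hiB⟩ := hQc i hi
          exact Finset.mem_biUnion.mpr ⟨B, hB, hiB⟩
      have hQsum : ∀ (Q : Finset (Finset I)), (∀ B ∈ Q, B ⊆ F) → (∀ i ∈ F, ∃ B ∈ Q, i ∈ B) →
          (∀ B ∈ Q, ∀ B' ∈ Q, B ≠ B' → Disjoint B B') →
          ∀ g : I → ℝ, ∑ B : {B // B ∈ Q}, ∑ j ∈ (B : Finset I), g j = ∑ j ∈ F, g j := by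
        intro Q hQF hQc hQd g
        rw [Finset.sum_coe_sort Q (fun B => ∑ j ∈ B, g j)]
        rw [← Finset.sum_biUnion (fun B hB B' hB' hne => hQd B hB B' hB' hne)]
        rw [hbu Q hQF hQc]
      let ext : ({j // j ∈ F} → ℝ) →ₗ[ℝ] (I → ℝ) :=
        { toFun := fun y i => if h : i ∈ F then y ⟨i, h⟩ else 0
          map_add' := by intro y z; funext i; by_cases h : i ∈ F <;> simp [h]
          map_smul' := by intro c y; funext i; by_cases h : i ∈ F <;> simp [h] }
      let Φ : (I → ℝ) →ₗ[ℝ] (({B // B ∈ P₁} → ℝ) × ({B // B ∈ P₂} → ℝ)) :=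
        { toFun := fun d => (fun B => ∑ j ∈ (B : Finset I), d j,
            fun B => ∑ j ∈ (B : Finset I), d j)
          map_add' := by
            intro a b
            refine Prod.ext ?_ ?_ <;> funext B <;> simp [Finset.sum_add_distrib]
          map_smul' := by
            intro c a
            refine Prod.ext ?_ ?_ <;> funext B <;> simp [Finset.mul_sum] }
      let ψ : (({B // B ∈ P₁} → ℝ) × ({B // B ∈ P₂} → ℝ)) →ₗ[ℝ] ℝ :=
        { toFun := fun p => (∑ B : {B // B ∈ P₁}, p.1 B) - ∑ B : {B // B ∈ P₂}, p.2 B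
          map_add' := by intro a b; simp [Finset.sum_add_distrib]; ring
          map_smul' := by intro c a; simp [← Finset.mul_sum]; ring }
      have hker : ∀ y : {j // j ∈ F} → ℝ, Φ (ext y) ∈ LinearMap.ker ψ := by
        intro y
        simp only [LinearMap.mem_ker, ψ, Φ, LinearMap.coe_mk, AddHom.coe_mk]
        rw [hQsum P₁ h1F hcov1 h1d, hQsum P₂ h2F hcov2 h2d]
        ring
      let L : ({j // j ∈ F} → ℝ) →ₗ[ℝ] ↥(LinearMap.ker ψ) :=
        LinearMap.codRestrict (LinearMap.ker ψ) (Φ ∘ₗ ext) hker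
      have hinj : Function.Injective L := by
        rw [← LinearMap.ker_eq_bot]
        rw [LinearMap.ker_eq_bot']
        intro y hy
        have hy' : Φ (ext y) = 0 := by
          have := congrArg Subtype.val hy
          exact this
        have hsupp : ∀ j ∉ F, ext y j = 0 := by
          intro j hj; simp only [ext, LinearMap.coe_mk, AddHom.coe_mk]; rw [dif_neg hj]
        have hs1 : ∀ B ∈ P₁, ∑ j ∈ B, ext y j = 0 := by
          intro B hB
          have := congrFun (congrArg Prod.fst hy') ⟨B, hB⟩
          exact this
        have hs2 : ∀ B ∈ P₂, ∑ j ∈ B, ext y j = 0 := by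
          intro B hB
          have := congrFun (congrArg Prod.snd hy') ⟨B, hB⟩
          exact this
        have hz := huniq (ext y) hsupp hs1 hs2
        funext ⟨j, hj⟩
        have := congrFun hz j
        simp only [ext, LinearMap.coe_mk, AddHom.coe_mk, Pi.zero_apply] at this
        rw [dif_pos hj] at this
        exact this
      have hle := LinearMap.finrank_le_finrank_of_injective hinj
      have hrkF : Module.finrank ℝ ({j // j ∈ F} → ℝ) = F.card := by
        rw [Module.finrank_fintype_fun_eq_card, Fintype.card_coe]
      obtain ⟨i₀, hi₀⟩ := hF
      obtain ⟨Bb, hBb, _⟩ := hcov1 i₀ hi₀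
      have hsurj : Function.Surjective ψ := by
        intro r
        refine ⟨(fun B => if B = ⟨Bb, hBb⟩ then r else 0, 0), ?_⟩
        simp [ψ, Finset.sum_ite_eq']
      have hrank := LinearMap.finrank_range_add_finrank_ker ψ
      rw [LinearMap.range_eq_top.mpr hsurj] at hrank
      simp only [finrank_top] at hrank
      have hdom : Module.finrank ℝ (({B // B ∈ P₁} → ℝ) × ({B // B ∈ P₂} → ℝ)) =
          P₁.card + P₂.card := by
        rw [Module.finrank_prod, Module.finrank_fintype_fun_eq_card,
          Module.finrank_fintype_fun_eq_card, Fintype.card_coe, Fintype.card_coe]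
      rw [hdom] at hrank
      have hrkR : Module.finrank ℝ ℝ = 1 := Module.finrank_self ℝ
      rw [hrkR] at hrank
      have hcard : ∀ (Q : Finset (Finset I)), (∀ B ∈ Q, B ⊆ F) → (∀ B ∈ Q, 2 ≤ B.card) →
          (∀ B ∈ Q, ∀ B' ∈ Q, B ≠ B' → Disjoint B B') →
          (∀ i ∈ F, ∃ B ∈ Q, i ∈ B) → 2 * Q.card ≤ F.card := by
        intro Q hQF hQ2 hQd hQc
        calc 2 * Q.card = ∑ _B ∈ Q, 2 := by rw [Finset.sum_const, smul_eq_mul, mul_comm]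
          _ ≤ ∑ B ∈ Q, B.card := Finset.sum_le_sum hQ2
          _ = (Q.biUnion (fun B => B)).card := (Finset.card_biUnion hQd).symm
          _ = F.card := by rw [hbu Q hQF hQc]
      have hc1 := hcard P₁ h1F h12 h1d hcov1
      have hc2 := hcard P₂ h2F h22 h2d hcov2
      have hP1pos : 0 < P₁.card := Finset.card_pos.mpr ⟨Bb, hBb⟩
      rw [hrkF] at hle
      omega

/-! ### Blocks of a laminar family -/

/-- Elements of `S ∩ F` whose minimal containing member of `T` is `S`. -/
def Block {I : Type*} [DecidableEq I] (T : Finset (Finset I)) (F S : Finset I) : Finset I :=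
  (S ∩ F).filter (fun i => ∀ S' ∈ T, i ∈ S' → S ⊆ S')

lemma block_subset {I : Type*} [DecidableEq I] (T : Finset (Finset I)) (F S : Finset I) :
    Block T F S ⊆ S ∩ F :=
  Finset.filter_subset _ _

lemma exists_block {I : Type*} [DecidableEq I] (T : Finset (Finset I))
    (hT : ∀ S ∈ T, ∀ S' ∈ T, S ⊆ S' ∨ S' ⊆ S ∨ Disjoint S S')
    (F : Finset I) {S : Finset I} (hS : S ∈ T) {i : I} (hiS : i ∈ S) (hiF : i ∈ F) :
    ∃ S₀ ∈ T, S₀ ⊆ S ∧ i ∈ Block T F S₀ := by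
  classical
  obtain ⟨S₀, hS₀, hmin⟩ := Finset.exists_min_image (T.filter (fun S' => i ∈ S'))
    Finset.card ⟨S, Finset.mem_filter.mpr ⟨hS, hiS⟩⟩
  obtain ⟨hS₀T, hiS₀⟩ := Finset.mem_filter.mp hS₀
  have hminsub : ∀ S' ∈ T, i ∈ S' → S₀ ⊆ S' := by
    intro S' hS' hiS'
    rcases hT S₀ hS₀T S' hS' with h | h | h
    · exact h
    · have hcard := hmin S' (Finset.mem_filter.mpr ⟨hS', hiS'⟩)
      rw [Finset.eq_of_subset_of_card_le h hcard]
    · exact absurd hiS₀ (Finset.disjoint_right.mp h hiS')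
  exact ⟨S₀, hS₀T, hminsub S hS hiS,
    Finset.mem_filter.mpr ⟨Finset.mem_inter.mpr ⟨hiS₀, hiF⟩, hminsub⟩⟩

lemma block_disjoint {I : Type*} [DecidableEq I] (T : Finset (Finset I)) (F : Finset I)
    {S S' : Finset I} (hS : S ∈ T) (hS' : S' ∈ T) (hne : S ≠ S') :
    Disjoint (Block T F S) (Block T F S') := by
  rw [Finset.disjoint_left]
  intro i hi hi'
  obtain ⟨hiS, hmin⟩ := Finset.mem_filter.mp hi
  obtain ⟨hiS', hmin'⟩ := Finset.mem_filter.mp hi'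
  exact hne (Finset.Subset.antisymm
    (hmin S' hS' (Finset.mem_of_mem_inter_left hiS'))
    (hmin' S hS (Finset.mem_of_mem_inter_left hiS)))

lemma sum_blocks {I : Type*} [DecidableEq I] (T : Finset (Finset I))
    (hT : ∀ S ∈ T, ∀ S' ∈ T, S ⊆ S' ∨ S' ⊆ S ∨ Disjoint S S')
    (F : Finset I) {S : Finset I} (hS : S ∈ T) (g : I → ℝ) :
    ∑ j ∈ S ∩ F, g j = ∑ S' ∈ T.filter (· ⊆ S), ∑ j ∈ Block T F S', g j := by
  classical
  rw [← Finset.sum_biUnion (fun B hB B' hB' hne =>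
    block_disjoint T F (Finset.mem_of_mem_filter B hB) (Finset.mem_of_mem_filter B' hB') hne)]
  congr 1
  apply Finset.Subset.antisymm
  · intro j hj
    obtain ⟨hjS, hjF⟩ := Finset.mem_inter.mp hj
    obtain ⟨S₀, hS₀T, hS₀S, hjB⟩ := exists_block T hT F hS hjS hjF
    exact Finset.mem_biUnion.mpr ⟨S₀, Finset.mem_filter.mpr ⟨hS₀T, hS₀S⟩, hjB⟩
  · intro j hj
    obtain ⟨S', hS', hjB⟩ := Finset.mem_biUnion.mp hj
    obtain ⟨hS'T, hS'S⟩ := Finset.mem_filter.mp hS'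
    have := block_subset T F S' hjB
    obtain ⟨hjS', hjF⟩ := Finset.mem_inter.mp this
    exact Finset.mem_inter.mpr ⟨hS'S hjS', hjF⟩

lemma block_int {I : Type*} [DecidableEq I] (T : Finset (Finset I))
    (hT : ∀ S ∈ T, ∀ S' ∈ T, S ⊆ S' ∨ S' ⊆ S ∨ Disjoint S S')
    (F : Finset I) (x : I → ℝ) (hx : ∀ S' ∈ T, IsIntR (∑ j ∈ S' ∩ F, x j)) :
    ∀ S ∈ T, IsIntR (∑ j ∈ Block T F S, x j) := by
  classical
  suffices h : ∀ n : ℕ, ∀ S ∈ T, S.card ≤ n → IsIntR (∑ j ∈ Block T F S, x j) by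
    intro S hS; exact h S.card S hS le_rfl
  intro n
  induction n with
  | zero =>
    intro S hS hcard
    have : S = ∅ := Finset.card_eq_zero.mp (Nat.le_zero.mp hcard)
    subst this
    have : Block T F ∅ = ∅ := by
      apply Finset.eq_empty_of_forall_notMem
      intro j hj
      have := block_subset T F ∅ hj
      simp at this
    rw [this]
    simpa using isIntR_zero
  | succ n ih =>
    intro S hS hcard
    have hdecomp := sum_blocks T hT F hS x
    have hins : T.filter (· ⊆ S) = insert S (T.filter (· ⊂ S)) := by
      ext S'
      simp only [Finset.mem_filter, Finset.mem_insert]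
      constructor
      · rintro ⟨hS'T, hsub⟩
        rcases eq_or_ne S' S with h | h
        · exact Or.inl h
        · exact Or.inr ⟨hS'T, Finset.ssubset_iff_subset_ne.mpr ⟨hsub, h⟩⟩
      · rintro (rfl | ⟨hS'T, hss⟩)
        · exact ⟨hS, le_rfl⟩
        · exact ⟨hS'T, hss.subset⟩
    have hSnot : S ∉ T.filter (· ⊂ S) := by
      simp only [Finset.mem_filter]
      rintro ⟨-, h⟩
      exact absurd rfl h.ne
    rw [hins, Finset.sum_insert hSnot] at hdecomp
    have heq : ∑ j ∈ Block T F S, x j =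
        ∑ j ∈ S ∩ F, x j - ∑ S' ∈ T.filter (· ⊂ S), ∑ j ∈ Block T F S', x j := by
      linarith [hdecomp]
    rw [heq]
    refine isIntR_sub (hx S hS) (isIntR_sum ?_)
    intro S' hS'
    obtain ⟨hS'T, hss⟩ := Finset.mem_filter.mp hS'
    exact ih S' hS'T (by
      have := Finset.card_lt_card hss
      omega)

/-! ### Existence of a perturbation direction -/

lemma exists_direction {I : Type*} [Fintype I] [DecidableEq I]
    (H₁ H₂ : Finset (Finset I)) (hH₁ : Laminar H₁) (hH₂ : Laminar H₂)
    (x : I → ℝ) (F : Finset I) (hFdef : ∀ i, i ∈ F ↔ ¬ IsIntR (x i)) (hF : F.Nonempty) :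
    ∃ d : I → ℝ, d ≠ 0 ∧ (∀ i ∉ F, d i = 0) ∧
      (∀ S, (S ∈ H₁ ∨ S ∈ H₂) → IsIntR (∑ j ∈ S, x j) → ∑ j ∈ S, d j = 0) := by
  classical
  set mkT : Finset (Finset I) → Finset (Finset I) :=
    fun Hk => Hk.filter (fun S => IsIntR (∑ j ∈ S ∩ F, x j)) with hmkT
  set mkP : Finset (Finset I) → Finset (Finset I) :=
    fun Hk => ((mkT Hk).image (fun S => Block (mkT Hk) F S)).filter (fun B => B.Nonempty)
    with hmkP
  have hTlam : ∀ Hk, Laminar Hk →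
      ∀ S ∈ mkT Hk, ∀ S' ∈ mkT Hk, S ⊆ S' ∨ S' ⊆ S ∨ Disjoint S S' :=
    fun Hk hL S hS S' hS' =>
      hL S (Finset.mem_of_mem_filter _ hS) S' (Finset.mem_of_mem_filter _ hS')
  have hTx : ∀ Hk, ∀ S ∈ mkT Hk, IsIntR (∑ j ∈ S ∩ F, x j) :=
    fun Hk S hS => (Finset.mem_filter.mp hS).2
  have hPF : ∀ Hk, ∀ B ∈ mkP Hk, B ⊆ F := by
    intro Hk B hB
    obtain ⟨hBim, -⟩ := Finset.mem_filter.mp hB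
    obtain ⟨S, hS, rfl⟩ := Finset.mem_image.mp hBim
    exact (block_subset _ F S).trans Finset.inter_subset_right
  have hP2 : ∀ Hk, Laminar Hk → ∀ B ∈ mkP Hk, 2 ≤ B.card := by
    intro Hk hL B hB
    obtain ⟨hBim, hBne⟩ := Finset.mem_filter.mp hB
    obtain ⟨S, hS, rfl⟩ := Finset.mem_image.mp hBim
    have hint := block_int (mkT Hk) (hTlam Hk hL) F x (hTx Hk) S hS
    have hpos : 0 < (Block (mkT Hk) F S).card := Finset.card_pos.mpr hBne
    by_contra h; push_neg at h
    have hcard1 : (Block (mkT Hk) F S).card = 1 := by omega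
    obtain ⟨i, hi⟩ := Finset.card_eq_one.mp hcard1
    rw [hi, Finset.sum_singleton] at hint
    have hiF : i ∈ F := by
      have hmem : i ∈ Block (mkT Hk) F S := by rw [hi]; exact Finset.mem_singleton_self i
      exact (Finset.mem_inter.mp (block_subset _ _ _ hmem)).2
    exact (hFdef i).mp hiF hint
  have hPd : ∀ Hk, Laminar Hk → ∀ B ∈ mkP Hk, ∀ B' ∈ mkP Hk, B ≠ B' → Disjoint B B' := by
    intro Hk hL B hB B' hB' hne
    obtain ⟨hBim, -⟩ := Finset.mem_filter.mp hB
    obtain ⟨S, hS, rfl⟩ := Finset.mem_image.mp hBim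
    obtain ⟨hBim', -⟩ := Finset.mem_filter.mp hB'
    obtain ⟨S', hS', rfl⟩ := Finset.mem_image.mp hBim'
    have hSS : S ≠ S' := by rintro rfl; exact hne rfl
    exact block_disjoint _ F hS hS' hSS
  obtain ⟨d, hd0, hdsupp, hdP1, hdP2⟩ := keyLemma F hF (mkP H₁) (mkP H₂)
    (hPF H₁) (hP2 H₁ hH₁) (hPd H₁ hH₁) (hPF H₂) (hP2 H₂ hH₂) (hPd H₂ hH₂)
  refine ⟨d, hd0, hdsupp, ?_⟩
  have final : ∀ Hk, Laminar Hk → (∀ B ∈ mkP Hk, ∑ j ∈ B, d j = 0) →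
      ∀ S ∈ Hk, IsIntR (∑ j ∈ S, x j) → ∑ j ∈ S, d j = 0 := by
    intro Hk hL hPk S hS hint
    have hsplit : ∀ g : I → ℝ, ∑ j ∈ S, g j = ∑ j ∈ S ∩ F, g j + ∑ j ∈ S \ F, g j :=
      fun g => (Finset.sum_inter_add_sum_sdiff S F g).symm
    have hSinT : S ∈ mkT Hk := by
      refine Finset.mem_filter.mpr ⟨hS, ?_⟩
      have hdiff : IsIntR (∑ j ∈ S \ F, x j) := isIntR_sum (fun j hj => by
        have hjF : j ∉ F := (Finset.mem_sdiff.mp hj).2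
        by_contra hcon
        exact hjF ((hFdef j).mpr hcon))
      have heq : ∑ j ∈ S ∩ F, x j = ∑ j ∈ S, x j - ∑ j ∈ S \ F, x j := by
        rw [hsplit x]; ring
      rw [heq]; exact isIntR_sub hint hdiff
    have h2 : ∑ j ∈ S \ F, d j = 0 :=
      Finset.sum_eq_zero fun j hj => hdsupp j (Finset.mem_sdiff.mp hj).2
    rw [hsplit d, h2, add_zero]
    rw [sum_blocks (mkT Hk) (hTlam Hk hL) F hSinT d]
    apply Finset.sum_eq_zero
    intro S' hS'
    by_cases hne : (Block (mkT Hk) F S').Nonempty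
    · exact hPk _ (Finset.mem_filter.mpr
        ⟨Finset.mem_image.mpr ⟨S', Finset.mem_of_mem_filter _ hS', rfl⟩, hne⟩)
    · rw [Finset.not_nonempty_iff_eq_empty.mp hne]; simp
  intro S hScase hint
  rcases hScase with h | h
  · exact final H₁ hH₁ hdP1 S h hint
  · exact final H₂ hH₂ hdP2 S h hint

/-! ### The line-search step -/

lemma stepLemma {I : Type*} [Fintype I] [DecidableEq I]
    (H : Finset (Finset I)) (nS NS : Finset I → ℕ)
    (x d : I → ℝ) (hxnn : ∀ i, 0 ≤ x i)
    (hxc : ∀ S ∈ H, (nS S : ℝ) ≤ ∑ j ∈ S, x j ∧ ∑ j ∈ S, x j ≤ (NS S : ℝ))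
    (hd0 : d ≠ 0) (hdsupp : ∀ i, IsIntR (x i) → d i = 0)
    (hdS : ∀ S ∈ H, IsIntR (∑ j ∈ S, x j) → ∑ j ∈ S, d j = 0)
    (C : ℝ) (hC : ∀ y : I → ℝ, (∀ i, 0 ≤ y i) →
      (∀ S ∈ H, (nS S : ℝ) ≤ ∑ j ∈ S, y j ∧ ∑ j ∈ S, y j ≤ (NS S : ℝ)) → ‖y‖ ≤ C) :
    ∃ t : ℝ, 0 < t ∧ (∀ i, 0 ≤ x i + t * d i) ∧
      (∀ S ∈ H, (nS S : ℝ) ≤ ∑ j ∈ S, (x j + t * d j) ∧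
        ∑ j ∈ S, (x j + t * d j) ≤ (NS S : ℝ)) ∧
      (∀ i, IsIntR (x i) → IsIntR (x i + t * d i)) ∧
      (∀ S ∈ H, IsIntR (∑ j ∈ S, x j) → IsIntR (∑ j ∈ S, (x j + t * d j))) ∧
      ((∃ i, ¬ IsIntR (x i) ∧ IsIntR (x i + t * d i)) ∨
        (∃ S ∈ H, ¬ IsIntR (∑ j ∈ S, x j) ∧ IsIntR (∑ j ∈ S, (x j + t * d j)))) := by
  classical
  have hsum : ∀ (t : ℝ) (S : Finset I),
      ∑ j ∈ S, (x j + t * d j) = ∑ j ∈ S, x j + t * ∑ j ∈ S, d j := by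
    intro t S; rw [Finset.sum_add_distrib, Finset.mul_sum]
  set A1 : Finset ℝ := (Finset.univ.filter (fun i => d i < 0)).image (fun i => x i / (-d i))
    with hA1
  set A2 : Finset ℝ := (H.filter (fun S => 0 < ∑ j ∈ S, d j)).image
      (fun S => ((NS S : ℝ) - ∑ j ∈ S, x j) / (∑ j ∈ S, d j)) with hA2
  set A3 : Finset ℝ := (H.filter (fun S => ∑ j ∈ S, d j < 0)).image
      (fun S => (∑ j ∈ S, x j - (nS S : ℝ)) / (-(∑ j ∈ S, d j))) with hA3
  have hdne : ∀ S ∈ H, ∑ j ∈ S, d j ≠ 0 → ¬ IsIntR (∑ j ∈ S, x j) :=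
    fun S hS h hint => h (hdS S hS hint)
  have hne : (A1 ∪ A2 ∪ A3).Nonempty := by
    rw [Finset.nonempty_iff_ne_empty]
    intro hemp
    rw [Finset.union_eq_empty, Finset.union_eq_empty] at hemp
    obtain ⟨⟨h1, h2⟩, h3⟩ := hemp
    rw [hA1, Finset.image_eq_empty, Finset.filter_eq_empty_iff] at h1
    rw [hA2, Finset.image_eq_empty, Finset.filter_eq_empty_iff] at h2
    rw [hA3, Finset.image_eq_empty, Finset.filter_eq_empty_iff] at h3
    obtain ⟨i₀, hi₀⟩ := Function.ne_iff.mp hd0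
    have hdpos : 0 < d i₀ :=
      lt_of_le_of_ne (not_lt.mp (h1 (Finset.mem_univ i₀))) (Ne.symm hi₀)
    set t := (C + 1) / d i₀ ⊔ 0 with ht
    have ht0 : 0 ≤ t := le_sup_right
    have hy : ∀ i, 0 ≤ x i + t * d i := by
      intro i
      have : 0 ≤ d i := not_lt.mp (h1 (Finset.mem_univ i))
      nlinarith [hxnn i]
    have hyc : ∀ S ∈ H, (nS S : ℝ) ≤ ∑ j ∈ S, (x j + t * d j) ∧
        ∑ j ∈ S, (x j + t * d j) ≤ (NS S : ℝ) := by
      intro S hS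
      have hz : ∑ j ∈ S, d j = 0 := le_antisymm (not_lt.mp (h2 hS)) (not_lt.mp (h3 hS))
      rw [hsum, hz, mul_zero, add_zero]
      exact hxc S hS
    have hnorm := hC _ hy hyc
    have hbig : C + 1 ≤ x i₀ + t * d i₀ := by
      have h1' : (C + 1) / d i₀ ≤ t := le_sup_left
      have h2' : C + 1 ≤ t * d i₀ := (div_le_iff₀ hdpos).mp h1'
      linarith [hxnn i₀]
    have habs : x i₀ + t * d i₀ ≤ C := by
      have hh := le_trans (norm_le_pi_norm (fun j => x j + t * d j) i₀) hnorm
      calc x i₀ + t * d i₀ ≤ |x i₀ + t * d i₀| := le_abs_self _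
        _ ≤ C := by simpa [Real.norm_eq_abs] using hh
    linarith
  set t := (A1 ∪ A2 ∪ A3).min' hne with htdef
  have hmempos : ∀ r ∈ A1 ∪ A2 ∪ A3, 0 < r := by
    intro r hr
    rcases Finset.mem_union.mp hr with hr' | hr3
    · rcases Finset.mem_union.mp hr' with hr1 | hr2
      · obtain ⟨i, hi, rfl⟩ := Finset.mem_image.mp hr1
        have hdi : d i < 0 := (Finset.mem_filter.mp hi).2
        have hxi : 0 < x i := by
          rcases lt_or_eq_of_le (hxnn i) with h | h
          · exact h
          · exact absurd (hdsupp i ⟨0, by rw [← h]; simp⟩) hdi.ne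
        exact div_pos hxi (by linarith)
      · obtain ⟨S, hSf, rfl⟩ := Finset.mem_image.mp hr2
        obtain ⟨hS, hσ⟩ := Finset.mem_filter.mp hSf
        have hni := hdne S hS (ne_of_gt hσ)
        have hlt : ∑ j ∈ S, x j < (NS S : ℝ) :=
          lt_of_le_of_ne (hxc S hS).2 (fun h => hni ⟨NS S, by rw [h]; simp⟩)
        exact div_pos (by linarith) hσ
    · obtain ⟨S, hSf, rfl⟩ := Finset.mem_image.mp hr3
      obtain ⟨hS, hσ⟩ := Finset.mem_filter.mp hSf
      have hni := hdne S hS (ne_of_lt hσ)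
      have hlt : (nS S : ℝ) < ∑ j ∈ S, x j :=
        lt_of_le_of_ne (hxc S hS).1 (fun h => hni ⟨nS S, by rw [← h]; simp⟩)
      exact div_pos (by linarith) (by linarith)
  have htpos : 0 < t := hmempos t (Finset.min'_mem _ hne)
  have htle : ∀ r ∈ A1 ∪ A2 ∪ A3, t ≤ r := fun r hr => Finset.min'_le _ r hr
  refine ⟨t, htpos, ?_, ?_, ?_, ?_, ?_⟩
  · intro i
    rcases le_or_gt 0 (d i) with h | h
    · nlinarith [hxnn i]
    · have hrmem : x i / (-d i) ∈ A1 ∪ A2 ∪ A3 :=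
        Finset.mem_union.mpr (Or.inl (Finset.mem_union.mpr (Or.inl
          (Finset.mem_image.mpr ⟨i, Finset.mem_filter.mpr ⟨Finset.mem_univ i, h⟩, rfl⟩))))
      have hle := htle _ hrmem
      have hpos : 0 < -d i := by linarith
      rw [le_div_iff₀ hpos] at hle
      nlinarith
  · intro S hS
    rw [hsum]
    rcases lt_trichotomy (∑ j ∈ S, d j) 0 with h | h | h
    · constructor
      · have hrmem : (∑ j ∈ S, x j - (nS S : ℝ)) / (-(∑ j ∈ S, d j)) ∈ A1 ∪ A2 ∪ A3 :=
          Finset.mem_union.mpr (Or.inr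
            (Finset.mem_image.mpr ⟨S, Finset.mem_filter.mpr ⟨hS, h⟩, rfl⟩))
        have hle := htle _ hrmem
        rw [le_div_iff₀ (by linarith)] at hle
        nlinarith
      · nlinarith [(hxc S hS).2, htpos]
    · rw [h, mul_zero, add_zero]; exact hxc S hS
    · constructor
      · nlinarith [(hxc S hS).1, htpos]
      · have hrmem : ((NS S : ℝ) - ∑ j ∈ S, x j) / (∑ j ∈ S, d j) ∈ A1 ∪ A2 ∪ A3 :=
          Finset.mem_union.mpr (Or.inl (Finset.mem_union.mpr (Or.inr
            (Finset.mem_image.mpr ⟨S, Finset.mem_filter.mpr ⟨hS, h⟩, rfl⟩))))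
        have hle := htle _ hrmem
        rw [le_div_iff₀ h] at hle
        nlinarith
  · intro i hint
    rw [hdsupp i hint, mul_zero, add_zero]; exact hint
  · intro S hS hint
    rw [hsum, hdS S hS hint, mul_zero, add_zero]; exact hint
  · have hmm := Finset.min'_mem (A1 ∪ A2 ∪ A3) hne
    rw [← htdef] at hmm
    rcases Finset.mem_union.mp hmm with hr' | hr3
    · rcases Finset.mem_union.mp hr' with hr1 | hr2
      · obtain ⟨i, hif, heq⟩ := Finset.mem_image.mp hr1
        have hdi : d i < 0 := (Finset.mem_filter.mp hif).2
        left
        refine ⟨i, fun h => hdi.ne (hdsupp i h), ?_⟩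
        have hnz : -d i ≠ 0 := by linarith
        have h2 : x i / (-d i) * d i = -x i := by rw [div_neg, neg_mul, div_mul_cancel₀ _ hdi.ne]
        have : x i + t * d i = 0 := by rw [← heq, h2]; ring
        rw [this]; exact isIntR_zero
      · obtain ⟨S, hSf, heq⟩ := Finset.mem_image.mp hr2
        obtain ⟨hS, hσ⟩ := Finset.mem_filter.mp hSf
        right
        refine ⟨S, hS, hdne S hS (ne_of_gt hσ), ?_⟩
        rw [hsum]
        have h2 : ((NS S : ℝ) - ∑ j ∈ S, x j) / (∑ j ∈ S, d j) * (∑ j ∈ S, d j)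
            = (NS S : ℝ) - ∑ j ∈ S, x j := div_mul_cancel₀ _ (ne_of_gt hσ)
        have : ∑ j ∈ S, x j + t * ∑ j ∈ S, d j = (NS S : ℝ) := by
          rw [← heq, h2]; ring
        rw [this]; exact ⟨NS S, by simp⟩
    · obtain ⟨S, hSf, heq⟩ := Finset.mem_image.mp hr3
      obtain ⟨hS, hσ⟩ := Finset.mem_filter.mp hSf
      right
      refine ⟨S, hS, hdne S hS (ne_of_lt hσ), ?_⟩
      rw [hsum]
      have hnz : -(∑ j ∈ S, d j) ≠ 0 := by linarith
      have h2 : (∑ j ∈ S, x j - (nS S : ℝ)) / (-(∑ j ∈ S, d j)) * (∑ j ∈ S, d j)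
          = (nS S : ℝ) - ∑ j ∈ S, x j := by rw [div_neg, neg_mul, div_mul_cancel₀ _ (ne_of_lt hσ)]; ring
      have : ∑ j ∈ S, x j + t * ∑ j ∈ S, d j = (nS S : ℝ) := by
        rw [← heq, h2]; ring
      rw [this]; exact ⟨nS S, by simp⟩

/-- Proposition 1: bi-hierarchical assignment constraints imply that every
marginal strategy is implementable, i.e. the (bounded) marginal polytope is the
convex hull of its integer points. -/
theorem biHierarchical_implies_implementable
    (I : Type*) [Fintype I] [DecidableEq I]
    (H : Finset (Finset I))
    (H₁ H₂ : Finset (Finset I)) (hH : H = H₁ ∪ H₂)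
    (hH₁ : Laminar H₁) (hH₂ : Laminar H₂)
    (nS NS : Finset I → ℕ) (hb : ∀ S ∈ H, nS S ≤ NS S)
    (MgS : Set (I → ℝ))
    (hMgS : MgS = {x | (∀ i, 0 ≤ x i) ∧
      ∀ S ∈ H, (nS S : ℝ) ≤ ∑ i ∈ S, x i ∧ ∑ i ∈ S, x i ≤ (NS S : ℝ)})
    (hbdd : Bornology.IsBounded MgS)
    (P : Set (I → ℝ))
    (hP : P = {x ∈ MgS | ∀ i, ∃ z : ℤ, x i = (z : ℝ)}) :
    MgS = convexHull ℝ P := by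
  classical
  subst hMgS hP hH
  set Mg : Set (I → ℝ) := {x | (∀ i, 0 ≤ x i) ∧
      ∀ S ∈ H₁ ∪ H₂, (nS S : ℝ) ≤ ∑ i ∈ S, x i ∧ ∑ i ∈ S, x i ≤ (NS S : ℝ)} with hMg
  set P : Set (I → ℝ) := {x ∈ Mg | ∀ i, ∃ z : ℤ, x i = (z : ℝ)} with hPdef
  have hPsub : P ⊆ Mg := fun y hy => hy.1
  have hconv : Convex ℝ Mg := by
    intro y hy z hz a b ha hb' hab
    constructor
    · intro i
      simp only [Pi.add_apply, Pi.smul_apply, smul_eq_mul]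
      have := hy.1 i; have := hz.1 i
      nlinarith
    · intro S hS
      have hsum : ∑ i ∈ S, (a • y + b • z) i = a * ∑ i ∈ S, y i + b * ∑ i ∈ S, z i := by
        simp only [Pi.add_apply, Pi.smul_apply, smul_eq_mul]
        rw [Finset.sum_add_distrib, Finset.mul_sum, Finset.mul_sum]
      rw [hsum]
      obtain ⟨hy1, hy2⟩ := hy.2 S hS
      obtain ⟨hz1, hz2⟩ := hz.2 S hS
      constructor
      · nlinarith
      · nlinarith
  refine Set.Subset.antisymm ?_ (convexHull_min hPsub hconv)
  obtain ⟨C, hC⟩ := isBounded_iff_forall_norm_le.mp hbdd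
  have hC' : ∀ y : I → ℝ, (∀ i, 0 ≤ y i) →
      (∀ S ∈ H₁ ∪ H₂, (nS S : ℝ) ≤ ∑ j ∈ S, y j ∧ ∑ j ∈ S, y j ≤ (NS S : ℝ)) → ‖y‖ ≤ C :=
    fun y h1 h2 => hC y ⟨h1, h2⟩
  set μ : (I → ℝ) → ℕ := fun y =>
    (Finset.univ.filter (fun i => ¬ IsIntR (y i))).card +
    ((H₁ ∪ H₂).filter (fun S => ¬ IsIntR (∑ j ∈ S, y j))).card with hμ
  suffices hmain : ∀ (k : ℕ) (y : I → ℝ), y ∈ Mg → μ y ≤ k → y ∈ convexHull ℝ P by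
    intro y hy
    exact hmain (μ y) y hy le_rfl
  intro k
  induction k with
  | zero =>
    intro y hy hμy
    have hFe : (Finset.univ.filter (fun i => ¬ IsIntR (y i))) = ∅ := by
      by_contra h
      have := Finset.card_pos.mpr (Finset.nonempty_iff_ne_empty.mpr h)
      simp only [hμ] at hμy
      omega
    refine subset_convexHull ℝ P ⟨hy, fun i => ?_⟩
    have := Finset.filter_eq_empty_iff.mp hFe (Finset.mem_univ i)
    exact not_not.mp this
  | succ k ih =>
    intro y hy hμy
    by_cases hFe : (Finset.univ.filter (fun i => ¬ IsIntR (y i))) = ∅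
    · refine subset_convexHull ℝ P ⟨hy, fun i => ?_⟩
      have := Finset.filter_eq_empty_iff.mp hFe (Finset.mem_univ i)
      exact not_not.mp this
    · set F : Finset I := Finset.univ.filter (fun i => ¬ IsIntR (y i)) with hF
      have hFne : F.Nonempty := Finset.nonempty_iff_ne_empty.mpr hFe
      have hFdef : ∀ i, i ∈ F ↔ ¬ IsIntR (y i) := by
        intro i; simp [hF, Finset.mem_filter]
      obtain ⟨d, hd0, hdsupp, hdS⟩ := exists_direction H₁ H₂ hH₁ hH₂ y F hFdef hFne
      have hdsupp' : ∀ i, IsIntR (y i) → d i = 0 := by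
        intro i h
        exact hdsupp i (fun hmem => (hFdef i).mp hmem h)
      have hdS' : ∀ S ∈ H₁ ∪ H₂, IsIntR (∑ j ∈ S, y j) → ∑ j ∈ S, d j = 0 :=
        fun S hS => hdS S (Finset.mem_union.mp hS)
      obtain ⟨tp, htp, hp1, hp2, hp3, hp4, hp5⟩ :=
        stepLemma (H₁ ∪ H₂) nS NS y d hy.1 hy.2 hd0 hdsupp' hdS' C hC'
      have hnd0 : (-d) ≠ 0 := neg_ne_zero.mpr hd0
      have hndsupp : ∀ i, IsIntR (y i) → (-d) i = 0 := by
        intro i h; simp [hdsupp' i h]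
      have hndS : ∀ S ∈ H₁ ∪ H₂, IsIntR (∑ j ∈ S, y j) → ∑ j ∈ S, (-d) j = 0 := by
        intro S hS h
        simp only [Pi.neg_apply, Finset.sum_neg_distrib]
        rw [hdS' S hS h]; ring
      obtain ⟨tm, htm, hm1, hm2, hm3, hm4, hm5⟩ :=
        stepLemma (H₁ ∪ H₂) nS NS y (-d) hy.1 hy.2 hnd0 hndsupp hndS C hC'
      set yp : I → ℝ := fun j => y j + tp * d j with hyp
      set ym : I → ℝ := fun j => y j + tm * (-d) j with hym
      have hypMg : yp ∈ Mg := ⟨hp1, hp2⟩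
      have hymMg : ym ∈ Mg := ⟨hm1, hm2⟩
      -- measure decreases
      have hsub1p : (Finset.univ.filter (fun i => ¬ IsIntR (yp i))) ⊆ F := by
        intro i hi
        rw [Finset.mem_filter] at hi
        rw [hFdef]
        intro h
        exact hi.2 (hp3 i h)
      have hsub2p : ((H₁ ∪ H₂).filter (fun S => ¬ IsIntR (∑ j ∈ S, yp j))) ⊆
          ((H₁ ∪ H₂).filter (fun S => ¬ IsIntR (∑ j ∈ S, y j))) := by
        intro S hS
        rw [Finset.mem_filter] at hS ⊢
        exact ⟨hS.1, fun h => hS.2 (hp4 S hS.1 h)⟩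
      have hsub1m : (Finset.univ.filter (fun i => ¬ IsIntR (ym i))) ⊆ F := by
        intro i hi
        rw [Finset.mem_filter] at hi
        rw [hFdef]
        intro h
        exact hi.2 (hm3 i h)
      have hsub2m : ((H₁ ∪ H₂).filter (fun S => ¬ IsIntR (∑ j ∈ S, ym j))) ⊆
          ((H₁ ∪ H₂).filter (fun S => ¬ IsIntR (∑ j ∈ S, y j))) := by
        intro S hS
        rw [Finset.mem_filter] at hS ⊢
        exact ⟨hS.1, fun h => hS.2 (hm4 S hS.1 h)⟩
      have hdecr : ∀ (z : I → ℝ) (t' : ℝ) (e : I → ℝ),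
          z = (fun j => y j + t' * e j) →
          (Finset.univ.filter (fun i => ¬ IsIntR (z i))) ⊆ F →
          ((H₁ ∪ H₂).filter (fun S => ¬ IsIntR (∑ j ∈ S, z j))) ⊆
            ((H₁ ∪ H₂).filter (fun S => ¬ IsIntR (∑ j ∈ S, y j))) →
          ((∃ i, ¬ IsIntR (y i) ∧ IsIntR (z i)) ∨
            (∃ S ∈ H₁ ∪ H₂, ¬ IsIntR (∑ j ∈ S, y j) ∧ IsIntR (∑ j ∈ S, z j))) →
          μ z < μ y := by
        intro z t' e hz hs1 hs2 hwit
        have hc2 := Finset.card_le_card hs2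
        have hc1 := Finset.card_le_card hs1
        rcases hwit with ⟨i, hni, hint⟩ | ⟨S, hSm, hni, hint⟩
        · have hss : (Finset.univ.filter (fun i => ¬ IsIntR (z i))) ⊂ F := by
            rw [Finset.ssubset_iff_of_subset hs1]
            exact ⟨i, (hFdef i).mpr hni, by
              rw [Finset.mem_filter]
              push_neg
              intro _
              exact hint⟩
          have := Finset.card_lt_card hss
          simp only [hμ, ← hF]
          omega
        · have hss : ((H₁ ∪ H₂).filter (fun S => ¬ IsIntR (∑ j ∈ S, z j))) ⊂
              ((H₁ ∪ H₂).filter (fun S => ¬ IsIntR (∑ j ∈ S, y j))) := by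
            rw [Finset.ssubset_iff_of_subset hs2]
            exact ⟨S, Finset.mem_filter.mpr ⟨hSm, hni⟩, by
              rw [Finset.mem_filter]
              push_neg
              intro _
              exact hint⟩
          have := Finset.card_lt_card hss
          simp only [hμ, ← hF]
          omega
      have hμp : μ yp < μ y := hdecr yp tp d rfl hsub1p hsub2p hp5
      have hμm : μ ym < μ y := hdecr ym tm (-d) rfl hsub1m hsub2m hm5
      have hyp' : yp ∈ convexHull ℝ P := ih yp hypMg (by omega)
      have hym' : ym ∈ convexHull ℝ P := ih ym hymMg (by omega)
      have hs : (0:ℝ) < tp + tm := by linarith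
      have ha : (0:ℝ) ≤ tm / (tp + tm) := div_nonneg (le_of_lt htm) (le_of_lt hs)
      have hb' : (0:ℝ) ≤ tp / (tp + tm) := div_nonneg (le_of_lt htp) (le_of_lt hs)
      have hab : tm / (tp + tm) + tp / (tp + tm) = 1 := by
        field_simp
        ring
      have hy_eq : y = (tm / (tp + tm)) • yp + (tp / (tp + tm)) • ym := by
        funext i
        simp only [Pi.add_apply, Pi.smul_apply, smul_eq_mul, hyp, hym, Pi.neg_apply]
        field_simp
        ring
      rw [hy_eq]
      exact convex_convexHull ℝ P hyp' hym' ha hb' hab
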